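/- Let A be a finite alphabet with uniform (Bernoulli) measure μ on A^ℕ. Let F : Q → Set(A^ℕ) assign to each state q of an unambiguous automaton the set F_q of sequences labeling a final run from q, and let α_q = μ(F_q). Then for every state p, F_p is the disjoint union over transitions p →a q of the sets a·F_q, and consequently α_p = (1/#A) · ∑_{(a,q) : p →a q} α_q; that is, M·α = α for the normalized adjacency matrix M. -/

import Mathlib

open Matrix BigOperators MeasureTheory
open scoped ENNReal

/-- Prepend a symbol to a sequence. -/
def consSeq {A : Type*} (a : A) (y : ℕ → A) : ℕ → A := fun n => Nat.casesOn n a y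

/-- `s` is a final run from `q` labeled `x`: it starts at `q`, follows transitions
of `Δ`, and visits the final set `Fst` infinitely often. -/
def IsFinalRun {Q A : Type*} (Δ : Q → A → Q → Prop) (Fst : Set Q)
    (q : Q) (x : ℕ → A) (s : ℕ → Q) : Prop :=
  s 0 = q ∧ (∀ i, Δ (s i) (x i) (s (i + 1))) ∧ ∀ m, ∃ k, m ≤ k ∧ s k ∈ Fst

section Aux

variable {Q A : Type*}

lemma consSeq_injective (a : A) : Function.Injective (consSeq a) := by
  intro y y' h
  funext n
  exact congrFun h (n + 1)

lemma consRun {Δ : Q → A → Q → Prop} {Fst : Set Q} {p q : Q} {a : A} {y : ℕ → A} {s : ℕ → Q}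
    (hΔ : Δ p a q) (h : IsFinalRun Δ Fst q y s) :
    IsFinalRun Δ Fst p (consSeq a y) (fun n => Nat.casesOn n p s) := by
  obtain ⟨hs0, hstep, hinf⟩ := h
  refine ⟨rfl, ?_, ?_⟩
  · intro i
    cases i with
    | zero => simpa [consSeq, hs0] using hΔ
    | succ i => exact hstep i
  · intro m
    obtain ⟨k, hk, hkF⟩ := hinf m
    exact ⟨k + 1, by omega, hkF⟩

lemma decompF (Δ : Q → A → Q → Prop) (Fst : Set Q) (p : Q) :
    {x : ℕ → A | ∃ s, IsFinalRun Δ Fst p x s} =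
      ⋃ (aq : A × Q) (_ : Δ p aq.1 aq.2),
        consSeq aq.1 '' {x | ∃ s, IsFinalRun Δ Fst aq.2 x s} := by
  ext x
  simp only [Set.mem_setOf_eq, Set.mem_iUnion, Set.mem_image]
  constructor
  · rintro ⟨s, hs0, hstep, hinf⟩
    refine ⟨(x 0, s 1), hs0 ▸ hstep 0, fun n => x (n + 1),
      ⟨fun n => s (n + 1), rfl, fun i => hstep (i + 1), ?_⟩, ?_⟩
    · intro m
      obtain ⟨k, hk, hkF⟩ := hinf (m + 1)
      refine ⟨k - 1, by omega, ?_⟩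
      have hk1 : k - 1 + 1 = k := by omega
      show s (k - 1 + 1) ∈ Fst
      rw [hk1]; exact hkF
    · funext n; cases n <;> rfl
  · rintro ⟨⟨a, q⟩, hΔ, y, hy, rfl⟩
    obtain ⟨s, hs⟩ := hy
    exact ⟨_, consRun hΔ hs⟩

lemma disjF {Δ : Q → A → Q → Prop} {Fst : Set Q}
    (hunamb : ∀ (q : Q) (x : ℕ → A) (s s' : ℕ → Q),
      IsFinalRun Δ Fst q x s → IsFinalRun Δ Fst q x s' → s = s')
    (p : Q) (aq aq' : A × Q) (hne : aq ≠ aq') (h : Δ p aq.1 aq.2) (h' : Δ p aq'.1 aq'.2) :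
    Disjoint (consSeq aq.1 '' {x | ∃ s, IsFinalRun Δ Fst aq.2 x s})
      (consSeq aq'.1 '' {x | ∃ s, IsFinalRun Δ Fst aq'.2 x s}) := by
  obtain ⟨a, q⟩ := aq
  obtain ⟨a', q'⟩ := aq'
  rw [Set.disjoint_left]
  rintro x ⟨y, ⟨s, hs⟩, rfl⟩ ⟨y', ⟨s', hs'⟩, hx⟩
  have ha : a' = a := congrFun hx 0
  subst ha
  have hy : y' = y := consSeq_injective a' hx
  subst hy
  have h1 := consRun h hs
  have h2 := consRun h' hs'
  have h12 := hunamb p (consSeq a' y') (fun n => Nat.casesOn n p s)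
    (fun n => Nat.casesOn n p s') h1 h2
  have hq : q = q' := by
    have h1' : s 0 = s' 0 := congrFun h12 1
    have e1 : s 0 = q := hs.1
    have e2 : s' 0 = q' := hs'.1
    rw [e1, e2] at h1'
    exact h1'
  exact hne (by rw [hq])

lemma measF [Fintype Q] [Fintype A] [MeasurableSpace A] [MeasurableSingletonClass A]
    (Δ : Q → A → Q → Prop) (Fst : Set Q)
    (hunamb : ∀ (q : Q) (x : ℕ → A) (s s' : ℕ → Q),
      IsFinalRun Δ Fst q x s → IsFinalRun Δ Fst q x s' → s = s')
    (q : Q) : MeasurableSet {x : ℕ → A | ∃ s, IsFinalRun Δ Fst q x s} := by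
  letI : MeasurableSpace Q := ⊤
  haveI : DiscreteMeasurableSpace Q := ⟨fun _ => trivial⟩
  set S : Set ((ℕ → A) × (ℕ → Q)) := {ps | IsFinalRun Δ Fst q ps.1 ps.2} with hS
  have hmeas : MeasurableSet S := by
    have h1 : MeasurableSet {ps : (ℕ → A) × (ℕ → Q) | ps.2 0 = q} := by
      have : Measurable fun ps : (ℕ → A) × (ℕ → Q) => ps.2 0 :=
        (measurable_pi_apply 0).comp measurable_snd
      exact this (MeasurableSet.of_discrete (s := {q}))
    have h2 : ∀ i, MeasurableSet {ps : (ℕ → A) × (ℕ → Q) | Δ (ps.2 i) (ps.1 i) (ps.2 (i + 1))} := by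
      intro i
      have hm : Measurable fun ps : (ℕ → A) × (ℕ → Q) =>
          ((ps.2 i, ps.1 i, ps.2 (i + 1)) : Q × A × Q) :=
        ((measurable_pi_apply i).comp measurable_snd).prodMk
          (((measurable_pi_apply i).comp measurable_fst).prodMk
            ((measurable_pi_apply (i + 1)).comp measurable_snd))
      exact hm ((Set.to_countable {t : Q × A × Q | Δ t.1 t.2.1 t.2.2}).measurableSet)
    have h3 : ∀ k, MeasurableSet {ps : (ℕ → A) × (ℕ → Q) | ps.2 k ∈ Fst} := by
      intro k
      exact ((measurable_pi_apply k).comp measurable_snd) trivial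
    have : S = {ps : (ℕ → A) × (ℕ → Q) | ps.2 0 = q} ∩
        ((⋂ i, {ps : (ℕ → A) × (ℕ → Q) | Δ (ps.2 i) (ps.1 i) (ps.2 (i + 1))}) ∩
          ⋂ m, ⋃ k, ⋃ (_ : m ≤ k), {ps : (ℕ → A) × (ℕ → Q) | ps.2 k ∈ Fst}) := by
      ext ps
      simp only [hS, Set.mem_setOf_eq, Set.mem_inter_iff, Set.mem_iInter, Set.mem_iUnion,
        IsFinalRun, exists_prop]
    rw [this]
    exact h1.inter ((MeasurableSet.iInter fun i => h2 i).inter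
      (MeasurableSet.iInter fun m => MeasurableSet.iUnion fun k =>
        MeasurableSet.iUnion fun _ => h3 k))
  have himg : {x : ℕ → A | ∃ s, IsFinalRun Δ Fst q x s} = Prod.fst '' S := by
    ext x
    simp only [Set.mem_setOf_eq, Set.mem_image, hS, Prod.exists]
    constructor
    · rintro ⟨s, hs⟩; exact ⟨x, s, hs, rfl⟩
    · rintro ⟨x', s, hs, rfl⟩; exact ⟨s, hs⟩
  rw [himg]
  refine hmeas.image_of_measurable_injOn measurable_fst ?_
  rintro ⟨x, s⟩ hxs ⟨x', s'⟩ hxs' (h : x = x')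
  subst h
  exact Prod.ext rfl (hunamb q x s s' hxs hxs')

end Aux

/-- For an unambiguous Büchi automaton with `F_q` the set of labels of final runs
from `q` and `α_q = μ(F_q)` (uniform Bernoulli measure), `F_p` is the disjoint union
over transitions `p →a q` of the sets `a·F_q`, and `M·α = α` for the normalized
adjacency matrix `M`. -/
theorem future_decomposition {Q A : Type*} [Fintype Q] [DecidableEq Q]
    [Fintype A] [Nonempty A] [MeasurableSpace A] [MeasurableSingletonClass A]
    (Δ : Q → A → Q → Prop) [∀ p a q, Decidable (Δ p a q)] (Fst : Set Q)
    (μ : Measure (ℕ → A)) [IsProbabilityMeasure μ]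
    (hμ : ∀ (a : A) (S : Set (ℕ → A)), μ (consSeq a '' S) = μ S / (Fintype.card A : ℝ≥0∞))
    (hunamb : ∀ (q : Q) (x : ℕ → A) (s s' : ℕ → Q),
      IsFinalRun Δ Fst q x s → IsFinalRun Δ Fst q x s' → s = s')
    (F : Q → Set (ℕ → A))
    (hF : ∀ q, F q = {x | ∃ s : ℕ → Q, IsFinalRun Δ Fst q x s})
    (α : Q → ℝ) (hα : ∀ q, α q = (μ (F q)).toReal)
    (M : Matrix Q Q ℝ)
    (hM : ∀ p q, M p q =
      ((Finset.univ.filter (fun a : A => Δ p a q)).card : ℝ) / Fintype.card A) :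
    (∀ p, F p = ⋃ (aq : A × Q) (_ : Δ p aq.1 aq.2), consSeq aq.1 '' F aq.2) ∧
    (∀ (p : Q) (aq aq' : A × Q), aq ≠ aq' → Δ p aq.1 aq.2 → Δ p aq'.1 aq'.2 →
      Disjoint (consSeq aq.1 '' F aq.2) (consSeq aq'.1 '' F aq'.2)) ∧
    (∀ p, α p = (1 / (Fintype.card A : ℝ)) *
      ∑ aq : A × Q, if Δ p aq.1 aq.2 then α aq.2 else 0) ∧
    M *ᵥ α = α := by
  have hcardA : (0 : ℝ) < Fintype.card A := by positivity
  have hdecomp : ∀ p, F p = ⋃ (aq : A × Q) (_ : Δ p aq.1 aq.2), consSeq aq.1 '' F aq.2 := by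
    intro p
    simp only [hF]
    exact decompF Δ Fst p
  have hdisj : ∀ (p : Q) (aq aq' : A × Q), aq ≠ aq' → Δ p aq.1 aq.2 → Δ p aq'.1 aq'.2 →
      Disjoint (consSeq aq.1 '' F aq.2) (consSeq aq'.1 '' F aq'.2) := by
    intro p aq aq' hne h h'
    simp only [hF]
    exact disjF hunamb p aq aq' hne h h'
  have hFm : ∀ q, MeasurableSet (F q) := by
    intro q; rw [hF]; exact measF Δ Fst hunamb q
  -- the measure computation
  have key : ∀ p : Q, α p = (1 / (Fintype.card A : ℝ)) *
      ∑ aq : A × Q, if Δ p aq.1 aq.2 then α aq.2 else 0 := by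
    intro p
    set T : Finset (A × Q) := Finset.univ.filter (fun aq : A × Q => Δ p aq.1 aq.2) with hT
    have hU : F p = ⋃ aq ∈ T, consSeq aq.1 '' F aq.2 := by
      rw [hdecomp p]
      ext x
      simp [hT]
    have hμFp : μ (F p) = ∑ aq ∈ T, μ (F aq.2) / (Fintype.card A : ℝ≥0∞) := by
      rw [hU, measure_biUnion_finset]
      · exact Finset.sum_congr rfl fun aq _ => hμ aq.1 (F aq.2)
      · intro aq haq aq' haq' hne
        simp only [hT, Finset.mem_coe, Finset.mem_filter] at haq haq'
        exact hdisj p aq aq' hne haq.2 haq'.2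
      · intro aq _
        have hm : Measurable (consSeq aq.1 : (ℕ → A) → ℕ → A) := by
          rw [measurable_pi_iff]
          intro n
          cases n with
          | zero => exact measurable_const
          | succ n => exact measurable_pi_apply n
        exact (hFm aq.2).image_of_measurable_injOn hm (consSeq_injective aq.1).injOn
    have hne_top : ∀ aq ∈ T, μ (F aq.2) / (Fintype.card A : ℝ≥0∞) ≠ ⊤ := by
      intro aq _
      exact (ENNReal.div_lt_top (measure_ne_top μ _)
        (by simp [Fintype.card_ne_zero])).ne
    have hsum : α p = ∑ aq ∈ T, α aq.2 / (Fintype.card A : ℝ) := by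
      rw [hα, hμFp, ENNReal.toReal_sum hne_top]
      refine Finset.sum_congr rfl fun aq _ => ?_
      rw [ENNReal.toReal_div, hα]
      norm_num
    rw [hsum, hT, Finset.sum_filter, Finset.mul_sum]
    refine Finset.sum_congr rfl fun aq _ => ?_
    by_cases h : Δ p aq.1 aq.2 <;> simp [h] <;> ring
  refine ⟨hdecomp, hdisj, key, ?_⟩
  funext p
  have hswap : ∑ aq : A × Q, (if Δ p aq.1 aq.2 then α aq.2 else 0) =
      ∑ q : Q, ((Finset.univ.filter (fun a : A => Δ p a q)).card : ℝ) * α q := by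
    rw [Fintype.sum_prod_type, Finset.sum_comm]
    refine Finset.sum_congr rfl fun q _ => ?_
    show ∑ a : A, (if Δ p a q then α q else 0) = _
    rw [← Finset.sum_filter, Finset.sum_const, nsmul_eq_mul]
  have : (M *ᵥ α) p = ∑ q : Q, M p q * α q := by
    simp [Matrix.mulVec, dotProduct]
  rw [this, key p, hswap, Finset.mul_sum]
  refine Finset.sum_congr rfl fun q _ => ?_
  rw [hM]
  ring
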